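/- Let N_0,N_1,N_2,N_3 be n×n Hermitian matrices with N_0⊗I_2 + N_1⊗M_1 + N_2⊗M_2 + N_3⊗M_3 ⪰ 0, where M_1 = diag(1,−1), M_2 = [[0,1],[1,0]], M_3 = [[0,i],[−i,0]]. Then there exist matrices P, Q (of some size r×n) with N_0 = P*P+Q*Q, N_1 = P*Q+Q*P, N_2 = i(Q*P−P*Q). -/

import Mathlib

open ComplexOrder Matrix Kronecker

theorem stmt7 (n : ℕ) (N₀ N₁ N₂ N₃ : Matrix (Fin n) (Fin n) ℂ)
    (h₀ : N₀.IsHermitian) (h₁ : N₁.IsHermitian) (h₂ : N₂.IsHermitian) (h₃ : N₃.IsHermitian)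
    (hpsd : (N₀ ⊗ₖ (1 : Matrix (Fin 2) (Fin 2) ℂ)
      + N₁ ⊗ₖ !![(1 : ℂ), 0; 0, -1]
      + N₂ ⊗ₖ !![(0 : ℂ), 1; 1, 0]
      + N₃ ⊗ₖ !![(0 : ℂ), Complex.I; -Complex.I, 0]).PosSemidef) :
    ∃ (r : ℕ) (P Q : Matrix (Fin r) (Fin n) ℂ),
      N₀ = Pᴴ * P + Qᴴ * Q ∧ N₁ = Pᴴ * Q + Qᴴ * P ∧
      N₂ = Complex.I • (Qᴴ * P - Pᴴ * Q) := by
  obtain ⟨B, hB⟩ : ∃ B : Matrix (Fin n × Fin 2) (Fin n × Fin 2) ℂ, (N₀ ⊗ₖ (1 : Matrix (Fin 2) (Fin 2) ℂ)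
      + N₁ ⊗ₖ !![(1 : ℂ), 0; 0, -1]
      + N₂ ⊗ₖ !![(0 : ℂ), 1; 1, 0]
      + N₃ ⊗ₖ !![(0 : ℂ), Complex.I; -Complex.I, 0]) = Bᴴ * B := by
    open scoped MatrixOrder in
    exact CStarAlgebra.nonneg_iff_eq_star_mul_self.mp hpsd.nonneg
  set e : Fin n × Fin 2 ≃ Fin (n * 2) := finProdFinEquiv
  -- entries of the big matrix
  have key : ∀ (i j : Fin n) (a b : Fin 2),
      ∑ k : Fin n × Fin 2, star (B k (i, a)) * B k (j, b)
        = N₀ i j * (1 : Matrix (Fin 2) (Fin 2) ℂ) a b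
          + N₁ i j * !![(1 : ℂ), 0; 0, -1] a b
          + N₂ i j * !![(0 : ℂ), 1; 1, 0] a b
          + N₃ i j * !![(0 : ℂ), Complex.I; -Complex.I, 0] a b := by
    intro i j a b
    have := congrFun (congrFun hB (i, a)) (j, b)
    simpa [Matrix.mul_apply, Matrix.conjTranspose_apply, Matrix.add_apply,
      Matrix.kroneckerMap_apply] using this.symm
  have h00 : ∀ i j : Fin n, ∑ k : Fin n × Fin 2, star (B k (i, 0)) * B k (j, 0)
      = N₀ i j + N₁ i j := by
    intro i j; have := key i j 0 0
    simpa [Matrix.one_apply] using this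
  have h11 : ∀ i j : Fin n, ∑ k : Fin n × Fin 2, star (B k (i, 1)) * B k (j, 1)
      = N₀ i j - N₁ i j := by
    intro i j; have := key i j 1 1
    simpa [Matrix.one_apply, sub_eq_add_neg] using this
  have h01 : ∀ i j : Fin n, ∑ k : Fin n × Fin 2, star (B k (i, 0)) * B k (j, 1)
      = N₂ i j + Complex.I * N₃ i j := by
    intro i j; have := key i j 0 1
    simpa [Matrix.one_apply, mul_comm] using this
  have h10 : ∀ i j : Fin n, ∑ k : Fin n × Fin 2, star (B k (i, 1)) * B k (j, 0)
      = N₂ i j - Complex.I * N₃ i j := by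
    intro i j; have := key i j 1 0
    simpa [Matrix.one_apply, mul_comm, sub_eq_add_neg] using this
  set P₀ : Matrix (Fin n × Fin 2) (Fin n) ℂ :=
    Matrix.of fun k i => (B k (i, 0) - Complex.I * B k (i, 1)) / 2 with hP₀
  set Q₀ : Matrix (Fin n × Fin 2) (Fin n) ℂ :=
    Matrix.of fun k i => (B k (i, 0) + Complex.I * B k (i, 1)) / 2 with hQ₀
  refine ⟨n * 2, P₀.submatrix e.symm id, Q₀.submatrix e.symm id, ?_, ?_, ?_⟩
  · have : (P₀.submatrix e.symm id)ᴴ * P₀.submatrix e.symm id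
        + (Q₀.submatrix e.symm id)ᴴ * Q₀.submatrix e.symm id
        = P₀ᴴ * P₀ + Q₀ᴴ * Q₀ := by
      simp [Matrix.conjTranspose_submatrix, Matrix.submatrix_mul_equiv]
    rw [this]
    ext i j
    simp only [Matrix.add_apply, Matrix.mul_apply, Matrix.conjTranspose_apply, hP₀, hQ₀,
      Matrix.of_apply]
    rw [← Finset.sum_add_distrib]
    have : ∀ k : Fin n × Fin 2,
        star ((B k (i, 0) - Complex.I * B k (i, 1)) / 2) * ((B k (j, 0) - Complex.I * B k (j, 1)) / 2)
        + star ((B k (i, 0) + Complex.I * B k (i, 1)) / 2) * ((B k (j, 0) + Complex.I * B k (j, 1)) / 2)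
        = (1/2) * (star (B k (i, 0)) * B k (j, 0)) + (1/2) * (star (B k (i, 1)) * B k (j, 1)) := by
      intro k
      simp only [star_div₀, star_sub, star_add, star_mul', Complex.star_def, Complex.conj_I,
        map_ofNat]
      linear_combination (-(starRingEnd ℂ) (B k (i, 1)) * B k (j, 1) / 2) * Complex.I_sq
    rw [Finset.sum_congr rfl fun k _ => this k, Finset.sum_add_distrib,
      ← Finset.mul_sum, ← Finset.mul_sum, h00, h11]
    ring
  · have : (P₀.submatrix e.symm id)ᴴ * Q₀.submatrix e.symm id
        + (Q₀.submatrix e.symm id)ᴴ * P₀.submatrix e.symm id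
        = P₀ᴴ * Q₀ + Q₀ᴴ * P₀ := by
      simp [Matrix.conjTranspose_submatrix, Matrix.submatrix_mul_equiv]
    rw [this]
    ext i j
    simp only [Matrix.add_apply, Matrix.mul_apply, Matrix.conjTranspose_apply, hP₀, hQ₀,
      Matrix.of_apply]
    rw [← Finset.sum_add_distrib]
    have : ∀ k : Fin n × Fin 2,
        star ((B k (i, 0) - Complex.I * B k (i, 1)) / 2) * ((B k (j, 0) + Complex.I * B k (j, 1)) / 2)
        + star ((B k (i, 0) + Complex.I * B k (i, 1)) / 2) * ((B k (j, 0) - Complex.I * B k (j, 1)) / 2)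
        = (1/2) * (star (B k (i, 0)) * B k (j, 0)) - (1/2) * (star (B k (i, 1)) * B k (j, 1)) := by
      intro k
      simp only [star_div₀, star_sub, star_add, star_mul', Complex.star_def, Complex.conj_I,
        map_ofNat]
      linear_combination ((starRingEnd ℂ) (B k (i, 1)) * B k (j, 1) / 2) * Complex.I_sq
    rw [Finset.sum_congr rfl fun k _ => this k, Finset.sum_sub_distrib,
      ← Finset.mul_sum, ← Finset.mul_sum, h00, h11]
    ring
  · have : (Q₀.submatrix e.symm id)ᴴ * P₀.submatrix e.symm id
        - (P₀.submatrix e.symm id)ᴴ * Q₀.submatrix e.symm id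
        = Q₀ᴴ * P₀ - P₀ᴴ * Q₀ := by
      simp [Matrix.conjTranspose_submatrix, Matrix.submatrix_mul_equiv]
    rw [this]
    ext i j
    simp only [Matrix.smul_apply, Matrix.sub_apply, Matrix.mul_apply,
      Matrix.conjTranspose_apply, hP₀, hQ₀, Matrix.of_apply, smul_eq_mul]
    rw [← Finset.sum_sub_distrib]
    have : ∀ k : Fin n × Fin 2,
        star ((B k (i, 0) + Complex.I * B k (i, 1)) / 2) * ((B k (j, 0) - Complex.I * B k (j, 1)) / 2)
        - star ((B k (i, 0) - Complex.I * B k (i, 1)) / 2) * ((B k (j, 0) + Complex.I * B k (j, 1)) / 2)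
        = (-Complex.I/2) * (star (B k (i, 0)) * B k (j, 1)) + (-Complex.I/2) * (star (B k (i, 1)) * B k (j, 0)) := by
      intro k
      simp only [star_div₀, star_sub, star_add, star_mul', Complex.star_def, Complex.conj_I,
        map_ofNat]
      ring
    rw [Finset.sum_congr rfl fun k _ => this k, Finset.sum_add_distrib,
      ← Finset.mul_sum, ← Finset.mul_sum, h01, h10]
    linear_combination (N₂ i j) * Complex.I_sq
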